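/- arXiv:1707.08722 — 10 statements merged into one kernel-verified Lean document; each statement's English description precedes it below -/
import Mathlib

section
/- Let M₁, M₂ be symmetric real 4×4 matrices with rank M₁ = 2, rank M₂ = 2, and rank(M₁ − M₂) = 4. Then every matrix N in the linear span of {M₁, M₂} with rank N = 2 is a nonzero scalar multiple of M₁ or a nonzero scalar multiple of M₂. -/
open Matrix Module

lemma aux_map_eq_range (A B : Matrix (Fin 4) (Fin 4) ℝ)
    (hA : Module.finrank ℝ (LinearMap.range A.mulVecLin) = 2)
    (hB : Module.finrank ℝ (LinearMap.ker B.mulVecLin) = 2)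
    (h12 : ∀ x : Fin 4 → ℝ, A.mulVec x = 0 → B.mulVec x = 0 → x = 0) :
    Submodule.map A.mulVecLin (LinearMap.ker B.mulVecLin)
      = LinearMap.range A.mulVecLin := by
  set K := LinearMap.ker B.mulVecLin with hK
  set g : K →ₗ[ℝ] (Fin 4 → ℝ) := A.mulVecLin.comp K.subtype with hg
  have hginj : Function.Injective g := by
    rw [← LinearMap.ker_eq_bot]
    rw [Submodule.eq_bot_iff]
    rintro ⟨x, hx⟩ hxg
    have hx' : B.mulVec x = 0 := hx
    have hAx : A.mulVec x = 0 := by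
      simpa [hg, Matrix.mulVecLin_apply] using hxg
    have := h12 x hAx hx'
    simpa [Subtype.ext_iff] using this
  have hrange : LinearMap.range g = Submodule.map A.mulVecLin K := by
    rw [hg, LinearMap.range_comp, Submodule.range_subtype]
  have hfr : Module.finrank ℝ (Submodule.map A.mulVecLin K) = 2 := by
    rw [← hrange, LinearMap.finrank_range_of_inj hginj, hB]
  exact Submodule.eq_of_le_of_finrank_le (LinearMap.map_le_range) (by rw [hfr, hA])

theorem stmt_1 (M₁ M₂ : Matrix (Fin 4) (Fin 4) ℝ)
    (hs₁ : M₁.IsSymm) (hs₂ : M₂.IsSymm)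
    (hr₁ : M₁.rank = 2) (hr₂ : M₂.rank = 2) (hr : (M₁ - M₂).rank = 4) :
    ∀ a b : ℝ, (a • M₁ + b • M₂).rank = 2 →
      (∃ c : ℝ, c ≠ 0 ∧ a • M₁ + b • M₂ = c • M₁) ∨
      (∃ c : ℝ, c ≠ 0 ∧ a • M₁ + b • M₂ = c • M₂) := by
  intro a b hN
  by_cases ha : a = 0
  · subst ha
    refine Or.inr ⟨b, ?_, by simp⟩
    rintro rfl
    simp at hN
  by_cases hb : b = 0
  · subst hb
    exact Or.inl ⟨a, ha, by simp⟩
  exfalso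
  have hVdim : Module.finrank ℝ (Fin 4 → ℝ) = 4 := by simp
  have hr₁' : Module.finrank ℝ (LinearMap.range M₁.mulVecLin) = 2 := hr₁
  have hr₂' : Module.finrank ℝ (LinearMap.range M₂.mulVecLin) = 2 := hr₂
  have hr' : Module.finrank ℝ (LinearMap.range (M₁ - M₂).mulVecLin) = 4 := hr
  have hrtop : LinearMap.range (M₁ - M₂).mulVecLin = ⊤ :=
    Submodule.eq_top_of_finrank_eq (by rw [hr', hVdim])
  -- injectivity of M₁ - M₂ : kernels of M₁ and M₂ intersect trivially
  have h12 : ∀ x : Fin 4 → ℝ, M₁.mulVec x = 0 → M₂.mulVec x = 0 → x = 0 := by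
    have hrn := (M₁ - M₂).mulVecLin.finrank_range_add_finrank_ker
    rw [hr', hVdim] at hrn
    have hker : LinearMap.ker (M₁ - M₂).mulVecLin = ⊥ :=
      Submodule.finrank_eq_zero.mp (by omega)
    intro x h1 h2
    have hx : x ∈ LinearMap.ker (M₁ - M₂).mulVecLin := by
      simp [LinearMap.mem_ker, Matrix.mulVecLin_apply, Matrix.sub_mulVec, h1, h2]
    rw [hker] at hx
    simpa using hx
  -- kernel dimensions
  have hk₁ : Module.finrank ℝ (LinearMap.ker M₁.mulVecLin) = 2 := by
    have := M₁.mulVecLin.finrank_range_add_finrank_ker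
    rw [hr₁', hVdim] at this; omega
  have hk₂ : Module.finrank ℝ (LinearMap.ker M₂.mulVecLin) = 2 := by
    have := M₂.mulVecLin.finrank_range_add_finrank_ker
    rw [hr₂', hVdim] at this; omega
  set N := a • M₁ + b • M₂ with hNdef
  -- range M₁ ≤ range N
  have hle₁ : LinearMap.range M₁.mulVecLin ≤ LinearMap.range N.mulVecLin := by
    intro y hy
    rw [← aux_map_eq_range M₁ M₂ hr₁' hk₂ h12] at hy
    obtain ⟨x, hxK, hxy⟩ := hy
    have hxK' : M₂.mulVec x = 0 := hxK
    refine ⟨a⁻¹ • x, ?_⟩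
    have hNx : N.mulVec x = a • y := by
      rw [hNdef, Matrix.add_mulVec, Matrix.smul_mulVec, Matrix.smul_mulVec,
        hxK', smul_zero, add_zero]
      rw [show M₁.mulVec x = y from hxy]
    rw [Matrix.mulVecLin_apply, Matrix.mulVec_smul, hNx, smul_smul,
      inv_mul_cancel₀ ha, one_smul]
  -- range M₂ ≤ range N
  have hle₂ : LinearMap.range M₂.mulVecLin ≤ LinearMap.range N.mulVecLin := by
    intro y hy
    rw [← aux_map_eq_range M₂ M₁ hr₂' hk₁ (fun x h1 h2 => h12 x h2 h1)] at hy
    obtain ⟨x, hxK, hxy⟩ := hy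
    have hxK' : M₁.mulVec x = 0 := hxK
    refine ⟨b⁻¹ • x, ?_⟩
    have hNx : N.mulVec x = b • y := by
      rw [hNdef, Matrix.add_mulVec, Matrix.smul_mulVec, Matrix.smul_mulVec,
        hxK', smul_zero, zero_add]
      rw [show M₂.mulVec x = y from hxy]
    rw [Matrix.mulVecLin_apply, Matrix.mulVec_smul, hNx, smul_smul,
      inv_mul_cancel₀ hb, one_smul]
  -- range N = ⊤
  have htop : LinearMap.range N.mulVecLin = ⊤ := by
    rw [eq_top_iff, ← hrtop]
    rintro y ⟨v, rfl⟩
    have h1 : M₁.mulVec v ∈ LinearMap.range N.mulVecLin :=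
      hle₁ ⟨v, rfl⟩
    have h2 : M₂.mulVec v ∈ LinearMap.range N.mulVecLin :=
      hle₂ ⟨v, rfl⟩
    have : (M₁ - M₂).mulVecLin v = M₁.mulVec v - M₂.mulVec v := by
      simp [Matrix.mulVecLin_apply, Matrix.sub_mulVec]
    rw [this]
    exact Submodule.sub_mem _ h1 h2
  have : N.rank = 4 := by
    have : Module.finrank ℝ (LinearMap.range N.mulVecLin) = 4 := by
      rw [htop, finrank_top, hVdim]
    exact this
  omega
end

section
/- Let M₁, M₂ be symmetric real 4×4 matrices with rank M₁ = 2, rank M₂ = 2, and rank(M₁ − M₂) = 4. Then the linear span of {M₁, M₂} contains no matrix of rank 3; that is, for every N = a·M₁ + b·M₂ with a, b ∈ ℝ, rank N ≠ 3. -/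
open Matrix

lemma rank_smul_ne (a : ℝ) (ha : a ≠ 0) (M : Matrix (Fin 4) (Fin 4) ℝ) :
    (a • M).rank = M.rank := by
  have h : (a • M).mulVecLin = M.mulVecLin.comp (a • LinearMap.id) := by
    ext x
    simp [Matrix.mulVecLin_apply, Matrix.smul_mulVec, Matrix.mulVec_smul]
  show Module.finrank ℝ (LinearMap.range (a • M).mulVecLin) = _
  rw [h, LinearMap.range_comp]
  have hsurj : LinearMap.range ((a : ℝ) • (LinearMap.id : (Fin 4 → ℝ) →ₗ[ℝ] (Fin 4 → ℝ))) = ⊤ := by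
    rw [LinearMap.range_eq_top]
    intro y
    exact ⟨a⁻¹ • y, by simp [smul_smul, mul_inv_cancel₀ ha, inv_mul_cancel₀ ha]⟩
  rw [hsurj, Submodule.map_top]
  rfl

theorem stmt_2 (M₁ M₂ : Matrix (Fin 4) (Fin 4) ℝ)
    (hs₁ : M₁.IsSymm) (hs₂ : M₂.IsSymm)
    (hr₁ : M₁.rank = 2) (hr₂ : M₂.rank = 2) (hr : (M₁ - M₂).rank = 4) :
    ∀ a b : ℝ, (a • M₁ + b • M₂).rank ≠ 3 := by
  intro a b
  rcases eq_or_ne a 0 with rfl | ha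
  · rcases eq_or_ne b 0 with rfl | hb
    · simp
    · rw [zero_smul, zero_add, rank_smul_ne b hb, hr₂]; norm_num
  rcases eq_or_ne b 0 with rfl | hb
  · rw [zero_smul, add_zero, rank_smul_ne a ha, hr₁]; norm_num
  -- both a b nonzero : show rank = 4
  set V₁ := LinearMap.range M₁.mulVecLin with hV₁
  set V₂ := LinearMap.range M₂.mulVecLin with hV₂
  have hfin : Module.finrank ℝ (Fin 4 → ℝ) = 4 := by simp
  -- range of M₁ - M₂ is contained in V₁ ⊔ V₂
  have hle : LinearMap.range (M₁ - M₂).mulVecLin ≤ V₁ ⊔ V₂ := by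
    rintro y ⟨x, rfl⟩
    have : (M₁ - M₂).mulVecLin x = M₁.mulVecLin x - M₂.mulVecLin x := by
      simp [Matrix.mulVecLin_apply, Matrix.sub_mulVec]
    rw [this]
    exact sub_mem (Submodule.mem_sup_left ⟨x, rfl⟩) (Submodule.mem_sup_right ⟨x, rfl⟩)
  have hsup : Module.finrank ℝ (V₁ ⊔ V₂ : Submodule ℝ (Fin 4 → ℝ)) = 4 := by
    have h1 : Module.finrank ℝ (LinearMap.range (M₁ - M₂).mulVecLin) = 4 := hr
    have h2 := Submodule.finrank_mono hle
    have h3 : Module.finrank ℝ (V₁ ⊔ V₂ : Submodule ℝ (Fin 4 → ℝ)) ≤ 4 :=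
      le_trans (Submodule.finrank_le _) (le_of_eq hfin)
    omega
  have hinf : V₁ ⊓ V₂ = ⊥ := by
    have := Submodule.finrank_sup_add_finrank_inf_eq V₁ V₂
    rw [hsup] at this
    have e1 : Module.finrank ℝ V₁ = 2 := hr₁
    have e2 : Module.finrank ℝ V₂ = 2 := hr₂
    rw [e1, e2] at this
    exact Submodule.finrank_eq_zero.mp (by omega)
  -- M₁ - M₂ has injective mulVecLin
  have hinj : Function.Injective (M₁ - M₂).mulVecLin := by
    rw [LinearMap.injective_iff_surjective, ← LinearMap.range_eq_top]
    apply Submodule.eq_top_of_finrank_eq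
    rw [hfin]; exact hr
  -- the combination is injective
  have hNinj : Function.Injective (a • M₁ + b • M₂).mulVecLin := by
    rw [injective_iff_map_eq_zero]
    intro x hx
    have hx' : a • M₁.mulVecLin x + b • M₂.mulVecLin x = 0 := by
      simpa [Matrix.mulVecLin_apply, Matrix.add_mulVec, Matrix.smul_mulVec] using hx
    have hmem : a • M₁.mulVecLin x ∈ V₁ ⊓ V₂ := by
      constructor
      · exact Submodule.smul_mem _ _ ⟨x, rfl⟩
      · have : a • M₁.mulVecLin x = -(b • M₂.mulVecLin x) := by linear_combination (norm := module) hx'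
        rw [this]
        exact Submodule.neg_mem _ (Submodule.smul_mem _ _ ⟨x, rfl⟩)
    rw [hinf, Submodule.mem_bot] at hmem
    have h1 : M₁.mulVecLin x = 0 := by
      have := smul_eq_zero.mp hmem
      tauto
    have h2 : M₂.mulVecLin x = 0 := by
      have : b • M₂.mulVecLin x = 0 := by linear_combination (norm := module) hx' - hmem
      have := smul_eq_zero.mp this
      tauto
    have : (M₁ - M₂).mulVecLin x = 0 := by
      simp [Matrix.mulVecLin_apply, Matrix.sub_mulVec]
      simpa [Matrix.mulVecLin_apply] using sub_eq_zero.mpr (h1.trans h2.symm)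
    exact hinj (by simpa using this)
  -- hence rank 4
  have : (a • M₁ + b • M₂).rank = 4 := by
    show Module.finrank ℝ (LinearMap.range (a • M₁ + b • M₂).mulVecLin) = 4
    rw [LinearMap.range_eq_top.mpr
      ((LinearMap.injective_iff_surjective).mp hNinj), finrank_top ℝ (Fin 4 → ℝ)]
    exact hfin
  omega
end

section
/- Let M₁, M₂ be symmetric real 4×4 matrices with rank M₁ = 2, rank M₂ = 2, and rank(M₁ − M₂) = 4. Then for all α ∈ ℝ, det(α·M₁ + (1−α)·M₂) = det(M₁ − M₂) · α² · (α − 1)². In particular, the quartic polynomial α ↦ det(α·M₁ + (1−α)·M₂) has exactly the two roots α = 0 and α = 1, each of multiplicity two. -/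
open Matrix

set_option maxRecDepth 10000 in
set_option maxHeartbeats 1000000 in
theorem stmt_3 (M₁ M₂ : Matrix (Fin 4) (Fin 4) ℝ)
    (hs₁ : M₁.IsSymm) (hs₂ : M₂.IsSymm)
    (hr₁ : M₁.rank = 2) (hr₂ : M₂.rank = 2) (hr : (M₁ - M₂).rank = 4) :
    (∀ α : ℝ, (α • M₁ + (1 - α) • M₂).det =
        (M₁ - M₂).det * α ^ 2 * (α - 1) ^ 2) ∧
    (∀ α : ℝ, (α • M₁ + (1 - α) • M₂).det = 0 ↔ α = 0 ∨ α = 1) := by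
  classical
  set N := M₁ - M₂ with hNdef
  have h4 : Module.finrank ℝ (Fin 4 → ℝ) = 4 := by simp
  -- kernel of N is trivial
  have hkerN : LinearMap.ker N.mulVecLin = ⊥ := by
    have h := LinearMap.finrank_range_add_finrank_ker N.mulVecLin
    have hrange : Module.finrank ℝ (LinearMap.range N.mulVecLin) = 4 := hr
    rw [hrange, h4] at h
    have : Module.finrank ℝ (LinearMap.ker N.mulVecLin) = 0 := by omega
    exact Submodule.finrank_eq_zero.mp this
  have hdetN : N.det ≠ 0 := by
    intro h
    obtain ⟨v, hv, hvN⟩ := (Matrix.exists_mulVec_eq_zero_iff).mpr h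
    have : v ∈ LinearMap.ker N.mulVecLin := by
      simpa [Matrix.mulVecLin_apply] using hvN
    rw [hkerN, Submodule.mem_bot] at this
    exact hv this
  have hu : IsUnit N.det := hdetN.isUnit
  have hNmul : N * N⁻¹ = 1 := Matrix.mul_nonsing_inv N hu
  have hNmul' : N⁻¹ * N = 1 := Matrix.nonsing_inv_mul N hu
  set C : Matrix (Fin 4) (Fin 4) ℝ := N⁻¹ * M₂ with hCdef
  -- kernels of M₂ and M₁
  set U := LinearMap.ker M₂.mulVecLin with hUdef
  set W := LinearMap.ker M₁.mulVecLin with hWdef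
  have hU : Module.finrank ℝ U = 2 := by
    have h := LinearMap.finrank_range_add_finrank_ker M₂.mulVecLin
    have hrange : Module.finrank ℝ (LinearMap.range M₂.mulVecLin) = 2 := hr₂
    rw [hrange, h4] at h
    rw [hUdef]
    omega
  have hW : Module.finrank ℝ W = 2 := by
    have h := LinearMap.finrank_range_add_finrank_ker M₁.mulVecLin
    have hrange : Module.finrank ℝ (LinearMap.range M₁.mulVecLin) = 2 := hr₁
    rw [hrange, h4] at h
    rw [hWdef]
    omega
  have hinf : U ⊓ W = ⊥ := by
    rw [eq_bot_iff]
    rintro v ⟨hv₂, hv₁⟩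
    have h₂ : M₂.mulVec v = 0 := hv₂
    have h₁ : M₁.mulVec v = 0 := hv₁
    have : v ∈ LinearMap.ker N.mulVecLin := by
      simp [Matrix.mulVecLin_apply, hNdef, Matrix.sub_mulVec, h₁, h₂]
    rw [hkerN] at this
    exact this
  have hsup : U ⊔ W = ⊤ := by
    apply Submodule.eq_top_of_finrank_eq
    have h := Submodule.finrank_sup_add_finrank_inf_eq U W
    rw [hinf, hU, hW] at h
    simp only [finrank_bot, add_zero] at h
    rw [h, h4]
  have hcompl : IsCompl U W := ⟨disjoint_iff.mpr hinf, codisjoint_iff.mpr hsup⟩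
  -- action of C on U and W
  have hCu : ∀ u : Fin 4 → ℝ, u ∈ U → C.mulVec u = 0 := by
    intro u hu'
    have h₂ : M₂.mulVec u = 0 := hu'
    rw [hCdef, ← Matrix.mulVec_mulVec, h₂, Matrix.mulVec_zero]
  have hCw : ∀ w : Fin 4 → ℝ, w ∈ W → C.mulVec w = -w := by
    intro w hw'
    have h₁ : M₁.mulVec w = 0 := hw'
    have hM₁ : M₁ = M₂ + N := by rw [hNdef]; abel
    have hCN : C + 1 = N⁻¹ * M₁ := by
      rw [hM₁, Matrix.mul_add, hNmul', hCdef]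
    have : (C + 1).mulVec w = 0 := by
      rw [hCN, ← Matrix.mulVec_mulVec, h₁, Matrix.mulVec_zero]
    rw [Matrix.add_mulVec, Matrix.one_mulVec] at this
    linear_combination (norm := module) this
  -- a basis adapted to the decomposition
  set bU : Module.Basis (Fin 2) ℝ U := Module.finBasisOfFinrankEq ℝ U hU with hbU
  set bW : Module.Basis (Fin 2) ℝ W := Module.finBasisOfFinrankEq ℝ W hW with hbW
  set e := Submodule.prodEquivOfIsCompl U W hcompl with he
  set b : Module.Basis (Fin 2 ⊕ Fin 2) ℝ (Fin 4 → ℝ) := (bU.prod bW).map e with hb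
  have hbl : ∀ i : Fin 2, b (Sum.inl i) = (bU i : Fin 4 → ℝ) := by
    intro i
    rw [hb, Module.Basis.map_apply]
    have : (bU.prod bW) (Sum.inl i) = ((bU i : U), (0 : W)) := by
      exact Prod.ext (Module.Basis.prod_apply_inl_fst bU bW i) (Module.Basis.prod_apply_inl_snd bU bW i)
    rw [this, he, Submodule.coe_prodEquivOfIsCompl']
    simp
  have hbr : ∀ i : Fin 2, b (Sum.inr i) = (bW i : Fin 4 → ℝ) := by
    intro i
    rw [hb, Module.Basis.map_apply]
    have : (bU.prod bW) (Sum.inr i) = ((0 : U), (bW i : W)) := by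
      exact Prod.ext (Module.Basis.prod_apply_inr_fst bU bW i) (Module.Basis.prod_apply_inr_snd bU bW i)
    rw [this, he, Submodule.coe_prodEquivOfIsCompl']
    simp
  -- the key determinant computation
  have key : ∀ α : ℝ, (C + α • 1).det = α ^ 2 * (α - 1) ^ 2 := by
    intro α
    set d : Fin 2 ⊕ Fin 2 → ℝ := Sum.elim (fun _ => α) (fun _ => α - 1) with hd
    have hact : ∀ i, (Matrix.toLin' (C + α • 1)) (b i) = d i • b i := by
      rintro (i | i)
      · rw [Matrix.toLin'_apply, hbl i, Matrix.add_mulVec, hCu _ (bU i).2,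
          Matrix.smul_mulVec, Matrix.one_mulVec]
        simp [hd]
      · rw [Matrix.toLin'_apply, hbr i, Matrix.add_mulVec, hCw _ (bW i).2,
          Matrix.smul_mulVec, Matrix.one_mulVec]
        simp only [hd, Sum.elim_inr]
        module
    have hmat : LinearMap.toMatrix b b (Matrix.toLin' (C + α • 1)) =
        Matrix.diagonal d := by
      ext i j
      rw [LinearMap.toMatrix_apply, hact j, _root_.map_smul, Module.Basis.repr_self]
      by_cases hij : i = j
      · subst hij
        rw [Matrix.diagonal_apply_eq, Finsupp.smul_apply, Finsupp.single_eq_same,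
          smul_eq_mul, mul_one]
      · rw [Matrix.diagonal_apply_ne _ hij, Finsupp.smul_apply,
          Finsupp.single_eq_of_ne hij, smul_eq_mul, mul_zero]
    have := LinearMap.det_toMatrix b (Matrix.toLin' (C + α • 1))
    rw [hmat] at this
    rw [← LinearMap.det_toLin' (C + α • 1), ← this, Matrix.det_diagonal]
    rw [Fintype.prod_sum_type]
    simp [hd, sq]
  -- factorization of the pencil
  have hNC : N * C = M₂ := by
    rw [hCdef, ← Matrix.mul_assoc, hNmul, Matrix.one_mul]
  have hfac : ∀ α : ℝ, α • M₁ + (1 - α) • M₂ = N * (C + α • 1) := by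
    intro α
    rw [Matrix.mul_add, Matrix.mul_smul, Matrix.mul_one, hNC, hNdef]
    module
  have main : ∀ α : ℝ, (α • M₁ + (1 - α) • M₂).det =
      (M₁ - M₂).det * α ^ 2 * (α - 1) ^ 2 := by
    intro α
    rw [hfac α, Matrix.det_mul, key α, ← hNdef, mul_assoc]
  refine ⟨main, fun α => ?_⟩
  rw [main α]
  constructor
  · intro h
    rcases mul_eq_zero.mp h with h' | h'
    · rcases mul_eq_zero.mp h' with h'' | h''
      · exact absurd h'' hdetN
      · exact Or.inl (pow_eq_zero_iff (by norm_num) |>.mp h'')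
    · exact Or.inr (by have := pow_eq_zero_iff (n := 2) (by norm_num) |>.mp h'; linarith)
  · rintro (rfl | rfl) <;> ring
end

section
/- Let A₁, A₂ be real 3×4 matrices, and let f₁, f₂ ∈ ℝ⁴ be nonzero vectors with A₁ f₁ = 0 and A₂ f₂ = 0. Let X, Y ∈ ℝ⁴, set M = X Yᵀ + Y Xᵀ and Nᵢ = Aᵢ M Aᵢᵀ for i = 1, 2. Consider the linear map L sending a triple (M′, λ₁, λ₂), where M′ is a symmetric real 4×4 matrix and λ₁, λ₂ ∈ ℝ, to the pair (A₁ M′ A₁ᵀ − λ₁ N₁, A₂ M′ A₂ᵀ − λ₂ N₂). Then both (f₁ f₂ᵀ + f₂ f₁ᵀ, 0, 0) and (M, 1, 1) lie in the kernel of L, and if f₁ and f₂ are linearly independent these two kernel elements are linearly independent, so the kernel of L has dimension at least 2. -/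
open Matrix

/-- The submodule of symmetric real 4×4 matrices. -/
def Sym4 : Submodule ℝ (Matrix (Fin 4) (Fin 4) ℝ) where
  carrier := {M | M.IsSymm}
  add_mem' := fun ha hb => ha.add hb
  zero_mem' := Matrix.isSymm_zero
  smul_mem' := fun c _ h => h.smul c

lemma mul_vecMulVec' {l m n : Type*} [Fintype m] (A : Matrix l m ℝ) (x : m → ℝ) (y : n → ℝ) :
    A * vecMulVec x y = vecMulVec (A.mulVec x) y := by
  ext i j
  simp [mul_apply, vecMulVec_apply, mulVec, dotProduct, Finset.sum_mul, mul_assoc]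

lemma vecMulVec_mul_transpose' {l m n : Type*} [Fintype m] (A : Matrix l m ℝ) (x : n → ℝ)
    (y : m → ℝ) : vecMulVec x y * Aᵀ = vecMulVec x (A.mulVec y) := by
  ext i j
  simp [mul_apply, vecMulVec_apply, mulVec, dotProduct, Finset.mul_sum, mul_comm, mul_left_comm]

lemma vecMulVec_mulVec' {m n : Type*} [Fintype n] (x : m → ℝ) (y v : n → ℝ) :
    (vecMulVec x y).mulVec v = (y ⬝ᵥ v) • x := by
  ext i
  simp only [vecMulVec_apply, mulVec, dotProduct, Pi.smul_apply, smul_eq_mul, Finset.sum_mul]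
  exact Finset.sum_congr rfl fun k _ => by ring

lemma key_zero {l m : Type*} [Fintype m] [Fintype l] (A : Matrix l m ℝ) (g h : m → ℝ)
    (hg : A.mulVec g = 0) : A * (vecMulVec g h + vecMulVec h g) * Aᵀ = 0 := by
  rw [Matrix.mul_add, Matrix.add_mul, mul_vecMulVec', mul_vecMulVec', vecMulVec_mul_transpose',
    vecMulVec_mul_transpose', hg]
  ext i j
  simp [vecMulVec_apply]

set_option maxHeartbeats 1000000 in
set_option synthInstance.maxHeartbeats 1000000 in
theorem stmt_4 (A₁ A₂ : Matrix (Fin 3) (Fin 4) ℝ) (f₁ f₂ : Fin 4 → ℝ)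
    (hf₁ : f₁ ≠ 0) (hf₂ : f₂ ≠ 0)
    (hA₁f₁ : A₁.mulVec f₁ = 0) (hA₂f₂ : A₂.mulVec f₂ = 0)
    (X Y : Fin 4 → ℝ) (M : Matrix (Fin 4) (Fin 4) ℝ)
    (hM : M = vecMulVec X Y + vecMulVec Y X)
    (N₁ N₂ : Matrix (Fin 3) (Fin 3) ℝ)
    (hN₁ : N₁ = A₁ * M * A₁ᵀ) (hN₂ : N₂ = A₂ * M * A₂ᵀ)
    (L : (Sym4 × ℝ × ℝ) →ₗ[ℝ] Matrix (Fin 3) (Fin 3) ℝ × Matrix (Fin 3) (Fin 3) ℝ)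
    (hL : ∀ p : Sym4 × ℝ × ℝ,
      L p = (A₁ * (p.1 : Matrix (Fin 4) (Fin 4) ℝ) * A₁ᵀ - p.2.1 • N₁,
             A₂ * (p.1 : Matrix (Fin 4) (Fin 4) ℝ) * A₂ᵀ - p.2.2 • N₂)) :
    ∃ (hF : vecMulVec f₁ f₂ + vecMulVec f₂ f₁ ∈ Sym4) (hMs : M ∈ Sym4),
      (⟨vecMulVec f₁ f₂ + vecMulVec f₂ f₁, hF⟩, (0 : ℝ), (0 : ℝ)) ∈ LinearMap.ker L ∧
      (⟨M, hMs⟩, (1 : ℝ), (1 : ℝ)) ∈ LinearMap.ker L ∧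
      (LinearIndependent ℝ ![f₁, f₂] →
        LinearIndependent ℝ
          ![((⟨vecMulVec f₁ f₂ + vecMulVec f₂ f₁, hF⟩, (0 : ℝ), (0 : ℝ)) :
              Sym4 × ℝ × ℝ),
            (⟨M, hMs⟩, (1 : ℝ), (1 : ℝ))] ∧
        2 ≤ Module.rank ℝ (LinearMap.ker L)) := by
  have hF : vecMulVec f₁ f₂ + vecMulVec f₂ f₁ ∈ Sym4 := by
    show Matrix.IsSymm _
    unfold Matrix.IsSymm
    ext i j
    simp [vecMulVec_apply, add_comm, mul_comm]
  have hMs : M ∈ Sym4 := by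
    show Matrix.IsSymm _
    unfold Matrix.IsSymm
    subst hM
    ext i j
    simp [vecMulVec_apply, add_comm, mul_comm]
  have hu : (((⟨vecMulVec f₁ f₂ + vecMulVec f₂ f₁, hF⟩, (0 : ℝ), (0 : ℝ)) : Sym4 × ℝ × ℝ))
      ∈ LinearMap.ker L := by
    rw [LinearMap.mem_ker, hL]
    have h2 : A₂ * (vecMulVec f₁ f₂ + vecMulVec f₂ f₁) * A₂ᵀ = 0 := by
      rw [add_comm]; exact key_zero A₂ f₂ f₁ hA₂f₂
    simp [key_zero A₁ f₁ f₂ hA₁f₁, h2]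
  have hv : ((⟨M, hMs⟩, (1 : ℝ), (1 : ℝ)) : Sym4 × ℝ × ℝ) ∈ LinearMap.ker L := by
    rw [LinearMap.mem_ker, hL]
    simp [hN₁, hN₂]
  refine ⟨hF, hMs, hu, hv, ?_⟩
  intro hind
  have hFne : vecMulVec f₁ f₂ + vecMulVec f₂ f₁ ≠ 0 := by
    intro h
    have h1 := congrArg (fun B : Matrix (Fin 4) (Fin 4) ℝ => B.mulVec f₁) h
    simp only [add_mulVec, vecMulVec_mulVec', Matrix.zero_mulVec] at h1
    have h2 := (LinearIndependent.pair_iff.mp (by simpa using hind)) (f₂ ⬝ᵥ f₁) (f₁ ⬝ᵥ f₁) h1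
    have : f₁ ⬝ᵥ f₁ = 0 := h2.2
    exact hf₁ (dotProduct_self_eq_zero.mp this)
  have hli : LinearIndependent ℝ
      ![((⟨vecMulVec f₁ f₂ + vecMulVec f₂ f₁, hF⟩, (0 : ℝ), (0 : ℝ)) : Sym4 × ℝ × ℝ),
        (⟨M, hMs⟩, (1 : ℝ), (1 : ℝ))] := by
    rw [LinearIndependent.pair_iff]
    intro s t hst
    have ht : t = 0 := by
      have := congrArg (fun p : Sym4 × ℝ × ℝ => p.2.1) hst
      simpa using this
    subst ht
    have hs : s = 0 := by
      have h1 := congrArg (fun p : Sym4 × ℝ × ℝ => (p.1 : Matrix (Fin 4) (Fin 4) ℝ)) hst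
      simp only [Prod.fst_add, Prod.smul_fst, smul_zero, add_zero, Prod.fst_zero,
        Submodule.coe_add, Submodule.coe_smul, ZeroMemClass.coe_zero, zero_smul] at h1
      by_contra hs0
      apply hFne
      have := congrArg (fun B => s⁻¹ • B) h1
      simpa [smul_smul, inv_mul_cancel₀ hs0] using this
    exact ⟨hs, rfl⟩
  refine ⟨hli, ?_⟩
  have hinj := hli.injective
  have hspan : Submodule.span ℝ
      (Set.range ![((⟨vecMulVec f₁ f₂ + vecMulVec f₂ f₁, hF⟩, (0 : ℝ), (0 : ℝ)) : Sym4 × ℝ × ℝ),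
        (⟨M, hMs⟩, (1 : ℝ), (1 : ℝ))]) ≤ LinearMap.ker L := by
    rw [Submodule.span_le]
    rintro x ⟨i, rfl⟩
    fin_cases i
    · exact hu
    · exact hv
  have h1 := Submodule.rank_mono hspan
  have h2 := rank_span hli
  rw [Cardinal.mk_range_eq _ hinj] at h2
  rw [h2] at h1
  simpa using h1
end

section
/- Let A₁, A₂ be real 3×4 matrices of rank 3, and let f₁, f₂ ∈ ℝ⁴ be nonzero vectors with A₁ f₁ = 0, A₂ f₂ = 0, and f₁, f₂ linearly independent. Then the set of symmetric real 4×4 matrices M satisfying A₁ M A₁ᵀ = 0 and A₂ M A₂ᵀ = 0 is exactly the one-dimensional subspace spanned by the unlabeled focal point f₁ f₂ᵀ + f₂ f₁ᵀ. -/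
open Matrix


lemma aux_vmv {n : ℕ} {a b : Fin n → ℝ}
    (h : vecMulVec a b + vecMulVec b a = 0) (ha : a ≠ 0) : b = 0 := by
  obtain ⟨i, hi⟩ := Function.ne_iff.mp ha
  simp only [Pi.zero_apply] at hi
  funext j
  have hij := congrFun (congrFun h i) j
  have hii := congrFun (congrFun h i) i
  simp only [vecMulVec_apply, Matrix.add_apply, Matrix.zero_apply] at hij hii
  simp only [Pi.zero_apply]
  have hbi : b i = 0 := by
    have h3 : a i * b i = 0 := by linarith
    exact (mul_eq_zero.mp h3).resolve_left hi
  rw [hbi] at hij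
  have h2 : a i * b j = 0 := by linarith
  exact (mul_eq_zero.mp h2).resolve_left hi

lemma aux_ker (A : Matrix (Fin 3) (Fin 4) ℝ) (hr : A.rank = 3) (f : Fin 4 → ℝ)
    (hf : f ≠ 0) (hAf : A *ᵥ f = 0) (v : Fin 4 → ℝ) (hv : A *ᵥ v = 0) :
    ∃ c : ℝ, v = c • f := by
  have hrange : Module.finrank ℝ (LinearMap.range A.mulVecLin) = 3 := hr
  have hrn := LinearMap.finrank_range_add_finrank_ker A.mulVecLin
  rw [hrange] at hrn
  simp at hrn
  have hker : Module.finrank ℝ (LinearMap.ker A.mulVecLin) = 1 := by omega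
  have hle : Submodule.span ℝ {f} ≤ LinearMap.ker A.mulVecLin := by
    rw [Submodule.span_singleton_le_iff_mem]
    simpa [Matrix.mulVecLin] using hAf
  have heq := Submodule.eq_of_le_of_finrank_eq hle (by rw [finrank_span_singleton hf, hker])
  have : v ∈ Submodule.span ℝ {f} := by
    rw [heq]; simpa [Matrix.mulVecLin] using hv
  obtain ⟨c, hc⟩ := Submodule.mem_span_singleton.mp this
  exact ⟨c, hc.symm⟩

lemma aux_row (A : Matrix (Fin 3) (Fin 4) ℝ) (hr : A.rank = 3) (f : Fin 4 → ℝ)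
    (hf : f ≠ 0) (hAf : A *ᵥ f = 0) (w : Fin 4 → ℝ) (hw : f ⬝ᵥ w = 0) :
    ∃ x : Fin 3 → ℝ, Aᵀ *ᵥ x = w := by
  set φ : (Fin 4 → ℝ) →ₗ[ℝ] ℝ :=
    { toFun := fun v => f ⬝ᵥ v
      map_add' := fun x y => dotProduct_add f x y
      map_smul' := fun c x => by simp } with hφ
  have hφf : φ f ≠ 0 := by
    simp only [hφ, LinearMap.coe_mk, AddHom.coe_mk]
    simpa using hf
  have h1 : Module.finrank ℝ (LinearMap.range φ) ≤ 1 := by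
    simpa using Submodule.finrank_le (LinearMap.range φ)
  have h2 : 0 < Module.finrank ℝ (LinearMap.range φ) := by
    rw [Module.finrank_pos_iff]
    exact ⟨⟨φ f, LinearMap.mem_range_self φ f⟩, 0, by simpa [Subtype.ext_iff] using hφf⟩
  have hrnφ := LinearMap.finrank_range_add_finrank_ker φ
  simp only [Module.finrank_fintype_fun_eq_card, Fintype.card_fin] at hrnφ
  have hkerφ : Module.finrank ℝ (LinearMap.ker φ) = 3 := by omega
  have hrangeT : Module.finrank ℝ (LinearMap.range Aᵀ.mulVecLin) = 3 := by
    have := Matrix.rank_transpose A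
    rw [hr] at this
    exact this
  have hle : LinearMap.range Aᵀ.mulVecLin ≤ LinearMap.ker φ := by
    rintro _ ⟨x, rfl⟩
    simp only [LinearMap.mem_ker, hφ, LinearMap.coe_mk, AddHom.coe_mk, Matrix.mulVecLin_apply]
    rw [Matrix.mulVec_transpose, dotProduct_comm, ← Matrix.dotProduct_mulVec, hAf,
      dotProduct_zero]
  have heq := Submodule.eq_of_le_of_finrank_eq hle (by rw [hrangeT, hkerφ])
  have : w ∈ LinearMap.range Aᵀ.mulVecLin := by
    rw [heq]
    simpa [hφ, LinearMap.mem_ker] using hw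
  obtain ⟨x, hx⟩ := this
  exact ⟨x, hx⟩

lemma aux_vmv_mulVec {m n : Type*} [Fintype n] (x : m → ℝ) (y v : n → ℝ) :
    (vecMulVec x y) *ᵥ v = (y ⬝ᵥ v) • x := by
  funext i
  simp [vecMulVec_apply, mulVec, dotProduct, Finset.sum_mul, Finset.mul_sum]
  congr 1; funext k; ring

lemma aux_sand (A B : Matrix (Fin 3) (Fin 4) ℝ) (x y : Fin 4 → ℝ) :
    A * vecMulVec x y * Bᵀ = vecMulVec (A *ᵥ x) (B *ᵥ y) := by
  ext i j
  simp only [mul_apply, vecMulVec_apply, transpose_apply, mulVec, dotProduct,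
    Finset.sum_mul, Finset.mul_sum]
  apply Finset.sum_congr rfl; intro k _
  apply Finset.sum_congr rfl; intro l _
  ring

lemma aux_vmv_smul (c : ℝ) (x y : Fin 4 → ℝ) :
    vecMulVec x (c • y) = c • vecMulVec x y := by
  ext i j; simp [vecMulVec_apply]; ring

lemma aux_vmv_smul' (c : ℝ) (x y : Fin 4 → ℝ) :
    vecMulVec (c • x) y = c • vecMulVec x y := by
  ext i j; simp [vecMulVec_apply]; ring

lemma aux_vmv_t (x y : Fin 4 → ℝ) : (vecMulVec x y)ᵀ = vecMulVec y x := by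
  ext i j; simp [vecMulVec_apply]; ring


lemma aux_vmv_z {m n : Type*} (x : n → ℝ) : vecMulVec (0 : m → ℝ) x = 0 := by
  ext i j; simp [vecMulVec_apply]

lemma aux_vmv_z' {m n : Type*} (x : m → ℝ) : vecMulVec x (0 : n → ℝ) = 0 := by
  ext i j; simp [vecMulVec_apply]

theorem stmt_5 (A₁ A₂ : Matrix (Fin 3) (Fin 4) ℝ)
    (hrA₁ : A₁.rank = 3) (hrA₂ : A₂.rank = 3)
    (f₁ f₂ : Fin 4 → ℝ) (hf₁ : f₁ ≠ 0) (hf₂ : f₂ ≠ 0)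
    (hA₁f₁ : A₁.mulVec f₁ = 0) (hA₂f₂ : A₂.mulVec f₂ = 0)
    (hind : LinearIndependent ℝ ![f₁, f₂]) :
    {M : Matrix (Fin 4) (Fin 4) ℝ | M.IsSymm ∧ A₁ * M * A₁ᵀ = 0 ∧ A₂ * M * A₂ᵀ = 0}
      = {M | ∃ c : ℝ, M = c • (vecMulVec f₁ f₂ + vecMulVec f₂ f₁)} ∧
    vecMulVec f₁ f₂ + vecMulVec f₂ f₁ ≠ 0 := by
  constructor
  · ext M
    simp only [Set.mem_setOf_eq]
    constructor
    · rintro ⟨hMs, h1, h2⟩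
      have hMt : Mᵀ = M := hMs
      set t : ℝ := f₁ ⬝ᵥ f₁ with ht
      have ht0 : t ≠ 0 := fun h => hf₁ (dotProduct_self_eq_zero.mp h)
      set e : Fin 4 → ℝ := M *ᵥ f₁ with he
      set u : Fin 4 → ℝ := (1/t) • e - ((f₁ ⬝ᵥ e)/(2*t^2)) • f₁ with hu
      set N := vecMulVec f₁ u + vecMulVec u f₁ with hN
      -- key step: action on vectors orthogonal to f₁
      have key : ∀ w : Fin 4 → ℝ, f₁ ⬝ᵥ w = 0 → M *ᵥ w = ((e ⬝ᵥ w)/t) • f₁ := by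
        intro w hw
        obtain ⟨x, hx⟩ := aux_row A₁ hrA₁ f₁ hf₁ hA₁f₁ w hw
        have h0 : A₁ *ᵥ (M *ᵥ w) = 0 := by
          rw [← hx, mulVec_mulVec, mulVec_mulVec, h1, zero_mulVec]
        obtain ⟨c, hc⟩ := aux_ker A₁ hrA₁ f₁ hf₁ hA₁f₁ _ h0
        have hdot : f₁ ⬝ᵥ (M *ᵥ w) = e ⬝ᵥ w := by
          rw [dotProduct_mulVec, ← mulVec_transpose, hMt, he]
        rw [hc] at hdot
        rw [dotProduct_smul, smul_eq_mul, ← ht] at hdot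
        have : c = (e ⬝ᵥ w)/t := by field_simp; linarith [hdot]
        rw [hc, this]
      have hNw : ∀ w : Fin 4 → ℝ, f₁ ⬝ᵥ w = 0 → N *ᵥ w = ((e ⬝ᵥ w)/t) • f₁ := by
        intro w hw
        rw [hN, add_mulVec, aux_vmv_mulVec, aux_vmv_mulVec, hw, zero_smul, add_zero]
        congr 1
        rw [hu, sub_dotProduct, smul_dotProduct, smul_dotProduct, hw, smul_eq_mul,
          smul_eq_mul, mul_zero, sub_zero]
        ring
      have hNf : N *ᵥ f₁ = e := by
        rw [hN, add_mulVec, aux_vmv_mulVec, aux_vmv_mulVec, ← ht]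
        rw [hu]
        have h1' : ((1/t) • e - (f₁ ⬝ᵥ e / (2 * t ^ 2)) • f₁) ⬝ᵥ f₁
            = f₁ ⬝ᵥ e / (2*t) := by
          rw [sub_dotProduct, smul_dotProduct, smul_dotProduct, ← ht, smul_eq_mul,
            smul_eq_mul, dotProduct_comm]
          field_simp
          ring
        rw [h1']
        funext i
        simp only [Pi.add_apply, Pi.smul_apply, Pi.sub_apply, smul_eq_mul]
        field_simp
        ring
      have hMv : ∀ v : Fin 4 → ℝ, M *ᵥ v = N *ᵥ v := by
        intro v
        have hwv : f₁ ⬝ᵥ (v - ((f₁ ⬝ᵥ v)/t) • f₁) = 0 := by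
          rw [dotProduct_sub, dotProduct_smul, ← ht, smul_eq_mul]
          field_simp
          ring
        have hsplit : v = ((f₁ ⬝ᵥ v)/t) • f₁ + (v - ((f₁ ⬝ᵥ v)/t) • f₁) := by
          rw [add_sub_cancel]
        calc M *ᵥ v = M *ᵥ (((f₁ ⬝ᵥ v)/t) • f₁ + (v - ((f₁ ⬝ᵥ v)/t) • f₁)) := by
              rw [← hsplit]
          _ = ((f₁ ⬝ᵥ v)/t) • (M *ᵥ f₁) + M *ᵥ (v - ((f₁ ⬝ᵥ v)/t) • f₁) := by
              rw [mulVec_add, mulVec_smul]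
          _ = ((f₁ ⬝ᵥ v)/t) • (N *ᵥ f₁) + N *ᵥ (v - ((f₁ ⬝ᵥ v)/t) • f₁) := by
              rw [hNf, ← he, key _ hwv, hNw _ hwv]
          _ = N *ᵥ v := by rw [← mulVec_smul, ← mulVec_add, ← hsplit]
      have hMN : M = N := by
        ext i j
        have := congrFun (hMv (Pi.single j 1)) i
        simpa [mulVec_single] using this
      have h2' : vecMulVec (A₂ *ᵥ f₁) (A₂ *ᵥ u) + vecMulVec (A₂ *ᵥ u) (A₂ *ᵥ f₁) = 0 := by
        rw [hMN, hN] at h2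
        rw [Matrix.mul_add, Matrix.add_mul, aux_sand, aux_sand] at h2
        exact h2
      have ha : A₂ *ᵥ f₁ ≠ 0 := by
        intro h0
        obtain ⟨c, hc⟩ := aux_ker A₂ hrA₂ f₂ hf₂ hA₂f₂ f₁ h0
        have hne := (linearIndependent_fin2.mp hind).2 c
        simp only [Matrix.cons_val_one, Matrix.head_cons, Matrix.cons_val_zero] at hne
        exact hne hc.symm
      have hb : A₂ *ᵥ u = 0 := aux_vmv h2' ha
      obtain ⟨c, hc⟩ := aux_ker A₂ hrA₂ f₂ hf₂ hA₂f₂ u hb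
      refine ⟨c, ?_⟩
      rw [hMN, hN, hc, aux_vmv_smul, aux_vmv_smul', smul_add]
    · rintro ⟨c, rfl⟩
      refine ⟨?_, ?_, ?_⟩
      · show _ᵀ = _
        rw [transpose_smul, transpose_add, aux_vmv_t, aux_vmv_t, add_comm]
      · rw [Matrix.mul_smul, Matrix.smul_mul, Matrix.mul_add,
          Matrix.add_mul, aux_sand, aux_sand, hA₁f₁, aux_vmv_z, aux_vmv_z', add_zero,
          smul_zero]
      · rw [Matrix.mul_smul, Matrix.smul_mul, Matrix.mul_add,
          Matrix.add_mul, aux_sand, aux_sand, hA₂f₂, aux_vmv_z, aux_vmv_z']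
        simp
  · intro h0
    exact hf₂ (aux_vmv h0 hf₁)
end

section
/- Let A₁, A₂ be real 3×4 matrices of rank 3 with nonzero focal points f₁, f₂ ∈ ℝ⁴ (A₁ f₁ = 0, A₂ f₂ = 0) that are linearly independent. Let X, Y ∈ ℝ⁴ satisfy: X and Y do not lie in the span of {f₁, f₂}; A₁ X is not a scalar multiple of A₁ Y; A₂ X is not a scalar multiple of A₂ Y; and the span of {X, Y, f₁, f₂} has dimension at most 3 (the two world points are coplanar with the baseline). Then there exist nonzero vectors X′, Y′ ∈ ℝ⁴ and nonzero scalars μ₁, μ₂, μ₃, μ₄ ∈ ℝ such that A₁ X′ = μ₁ A₁ X, A₂ X′ = μ₂ A₂ Y, A₁ Y′ = μ₃ A₁ Y, A₂ Y′ = μ₄ A₂ X, and neither X′ nor Y′ is a scalar multiple of X or of Y. In particular the unlabeled triangulation from the two views is ambiguous. -/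
open Matrix

theorem stmt_8 (A₁ A₂ : Matrix (Fin 3) (Fin 4) ℝ)
    (hrA₁ : A₁.rank = 3) (hrA₂ : A₂.rank = 3)
    (f₁ f₂ : Fin 4 → ℝ) (hf₁ : f₁ ≠ 0) (hf₂ : f₂ ≠ 0)
    (hA₁f₁ : A₁.mulVec f₁ = 0) (hA₂f₂ : A₂.mulVec f₂ = 0)
    (hind : LinearIndependent ℝ ![f₁, f₂])
    (X Y : Fin 4 → ℝ)
    (hX : X ∉ Submodule.span ℝ ({f₁, f₂} : Set (Fin 4 → ℝ)))
    (hY : Y ∉ Submodule.span ℝ ({f₁, f₂} : Set (Fin 4 → ℝ)))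
    (h₁ : ∀ c : ℝ, A₁.mulVec X ≠ c • A₁.mulVec Y)
    (h₂ : ∀ c : ℝ, A₂.mulVec X ≠ c • A₂.mulVec Y)
    (hcop : Module.finrank ℝ
      (Submodule.span ℝ ({X, Y, f₁, f₂} : Set (Fin 4 → ℝ))) ≤ 3) :
    ∃ X' Y' : Fin 4 → ℝ, X' ≠ 0 ∧ Y' ≠ 0 ∧
      ∃ μ₁ μ₂ μ₃ μ₄ : ℝ, μ₁ ≠ 0 ∧ μ₂ ≠ 0 ∧ μ₃ ≠ 0 ∧ μ₄ ≠ 0 ∧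
        A₁.mulVec X' = μ₁ • A₁.mulVec X ∧
        A₂.mulVec X' = μ₂ • A₂.mulVec Y ∧
        A₁.mulVec Y' = μ₃ • A₁.mulVec Y ∧
        A₂.mulVec Y' = μ₄ • A₂.mulVec X ∧
        (∀ c : ℝ, X' ≠ c • X) ∧ (∀ c : ℝ, X' ≠ c • Y) ∧
        (∀ c : ℝ, Y' ≠ c • X) ∧ (∀ c : ℝ, Y' ≠ c • Y) := by
  -- {X, f₁, f₂} is linearly independent
  have hXind : LinearIndependent ℝ ![X, f₁, f₂] := by
    rw [show (![X, f₁, f₂] : Fin 3 → _) = Fin.cons X ![f₁, f₂] from rfl,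
      linearIndependent_fin_cons]
    refine ⟨hind, ?_⟩
    rw [show Set.range ![f₁, f₂] = {f₁, f₂} by
      ext z; simp [Matrix.range_cons, Matrix.range_empty]; tauto]
    exact hX
  have hrange : Set.range ![X, f₁, f₂] = {X, f₁, f₂} := by
    ext z; simp [Matrix.range_cons, Matrix.range_empty]; tauto
  have h3 : Module.finrank ℝ
      (Submodule.span ℝ ({X, f₁, f₂} : Set (Fin 4 → ℝ))) = 3 := by
    rw [← hrange, finrank_span_eq_card hXind]; simp
  have hle : Submodule.span ℝ ({X, f₁, f₂} : Set (Fin 4 → ℝ)) ≤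
      Submodule.span ℝ ({X, Y, f₁, f₂} : Set (Fin 4 → ℝ)) := by
    apply Submodule.span_mono
    intro z hz
    simp only [Set.mem_insert_iff, Set.mem_singleton_iff] at hz ⊢
    tauto
  have heq : Submodule.span ℝ ({X, f₁, f₂} : Set (Fin 4 → ℝ)) =
      Submodule.span ℝ ({X, Y, f₁, f₂} : Set (Fin 4 → ℝ)) :=
    Submodule.eq_of_le_of_finrank_le hle (hcop.trans_eq h3.symm)
  have hYmem : Y ∈ Submodule.span ℝ ({X, f₁, f₂} : Set (Fin 4 → ℝ)) := by
    rw [heq]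
    exact Submodule.subset_span (by simp)
  rw [show ({X, f₁, f₂} : Set (Fin 4 → ℝ)) = insert X {f₁, f₂} from rfl,
    Submodule.mem_span_insert] at hYmem
  obtain ⟨a, z, hz, hYz⟩ := hYmem
  rw [Submodule.mem_span_pair] at hz
  obtain ⟨β, γ, hzeq⟩ := hz
  have hYe : Y = a • X + β • f₁ + γ • f₂ := by
    rw [hYz, ← hzeq]; abel
  -- helper: X, Y not in span {f₁, f₂}, pointwise form
  have hXn : ∀ s t : ℝ, X ≠ s • f₁ + t • f₂ := fun s t h =>
    hX (Submodule.mem_span_pair.mpr ⟨s, t, h.symm⟩)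
  have hYn : ∀ s t : ℝ, Y ≠ s • f₁ + t • f₂ := fun s t h =>
    hY (Submodule.mem_span_pair.mpr ⟨s, t, h.symm⟩)
  have ha : a ≠ 0 := by
    intro h
    exact hYn β γ (by rw [hYe, h, zero_smul, zero_add])
  -- γ ≠ 0, else A₁ X is a multiple of A₁ Y
  have hA₁Y : A₁.mulVec Y = a • A₁.mulVec X + γ • A₁.mulVec f₂ := by
    rw [hYe]
    simp [Matrix.mulVec_add, Matrix.mulVec_smul, hA₁f₁]
  have hA₂Y : A₂.mulVec Y = a • A₂.mulVec X + β • A₂.mulVec f₁ := by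
    rw [hYe]
    simp [Matrix.mulVec_add, Matrix.mulVec_smul, hA₂f₂]
  have hγ : γ ≠ 0 := by
    intro h
    apply h₁ a⁻¹
    rw [hA₁Y, h, zero_smul, add_zero, smul_smul, inv_mul_cancel₀ ha, one_smul]
  have hβ : β ≠ 0 := by
    intro h
    apply h₂ a⁻¹
    rw [hA₂Y, h, zero_smul, add_zero, smul_smul, inv_mul_cancel₀ ha, one_smul]
  refine ⟨a • X + β • f₁, X + (a⁻¹ * γ) • f₂, ?_, ?_,
    a, 1, a⁻¹, 1, ha, one_ne_zero, inv_ne_zero ha, one_ne_zero, ?_, ?_, ?_, ?_, ?_, ?_, ?_, ?_⟩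
  · -- X' ≠ 0
    intro h
    apply hYn 0 γ
    rw [hYe, show a • X + β • f₁ + γ • f₂ = (a • X + β • f₁) + γ • f₂ from by abel,
      h, zero_add, zero_smul, zero_add]
  · -- Y' ≠ 0
    intro h
    apply hXn 0 (-(a⁻¹ * γ))
    have : X = -((a⁻¹ * γ) • f₂) := by
      rw [eq_neg_iff_add_eq_zero]; exact h
    rw [this, zero_smul, zero_add, neg_smul]
  · rw [Matrix.mulVec_add, Matrix.mulVec_smul, Matrix.mulVec_smul, hA₁f₁, smul_zero, add_zero]
  · rw [one_smul, hYe]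
    simp [Matrix.mulVec_add, Matrix.mulVec_smul, hA₂f₂]
  · rw [Matrix.mulVec_add, Matrix.mulVec_smul, hA₁Y, smul_add, smul_smul, smul_smul,
      inv_mul_cancel₀ ha, one_smul]
  · rw [one_smul, Matrix.mulVec_add, Matrix.mulVec_smul, hA₂f₂, smul_zero, add_zero]
  · -- X' ≠ c • X
    intro c h
    rcases eq_or_ne c a with rfl | hca
    · have h2 : β • f₁ = 0 := by
        funext i
        have hh := congrFun h i
        simp only [Pi.add_apply, Pi.smul_apply, smul_eq_mul, Pi.zero_apply] at hh ⊢
        linear_combination hh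
      rcases smul_eq_zero.mp h2 with h' | h'
      exacts [hβ h', hf₂ (False.elim (hf₁ h'))]
    · have h2 : (c - a) • X = β • f₁ := by
        funext i
        have hh := congrFun h i
        simp only [Pi.add_apply, Pi.smul_apply, smul_eq_mul] at hh ⊢
        linear_combination -hh
      apply hXn ((c - a)⁻¹ * β) 0
      rw [zero_smul, add_zero, ← smul_smul, ← h2, smul_smul,
        inv_mul_cancel₀ (sub_ne_zero.mpr hca), one_smul]
  · -- X' ≠ c • Y
    intro c h
    have h2 : (1 - c) • Y = γ • f₂ := by
      funext i
      have hh := congrFun h i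
      have hYi := congrFun hYe i
      simp only [Pi.add_apply, Pi.smul_apply, smul_eq_mul] at hh hYi ⊢
      linear_combination hh + hYi
    rcases eq_or_ne c 1 with rfl | hc1
    · rw [sub_self, zero_smul, eq_comm] at h2
      rcases smul_eq_zero.mp h2 with h' | h'
      exacts [hγ h', hf₂ h']
    · apply hYn 0 ((1 - c)⁻¹ * γ)
      rw [zero_smul, zero_add, ← smul_smul, ← h2, smul_smul,
        inv_mul_cancel₀ (sub_ne_zero.mpr (Ne.symm hc1)), one_smul]
  · -- Y' ≠ c • X
    intro c h
    have h2 : (c - 1) • X = (a⁻¹ * γ) • f₂ := by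
      funext i
      have hh := congrFun h i
      simp only [Pi.add_apply, Pi.smul_apply, smul_eq_mul] at hh ⊢
      linear_combination -hh
    rcases eq_or_ne c 1 with rfl | hc1
    · rw [sub_self, zero_smul, eq_comm] at h2
      rcases smul_eq_zero.mp h2 with h' | h'
      · exact hγ ((mul_eq_zero.mp h').resolve_left (inv_ne_zero ha))
      · exact hf₂ h'
    · apply hXn 0 ((c - 1)⁻¹ * (a⁻¹ * γ))
      rw [zero_smul, zero_add, ← smul_smul, ← h2, smul_smul,
        inv_mul_cancel₀ (sub_ne_zero.mpr hc1), one_smul]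
  · -- Y' ≠ c • Y
    intro c h
    have hinv : a⁻¹ * a = 1 := inv_mul_cancel₀ ha
    rcases eq_or_ne (c * a) 1 with hca | hca
    · have hc : c = a⁻¹ := eq_inv_of_mul_eq_one_left hca
      subst hc
      have h2 : (a⁻¹ * β) • f₁ = 0 := by
        funext i
        have hh := congrFun h i
        have hYi := congrFun hYe i
        simp only [Pi.add_apply, Pi.smul_apply, smul_eq_mul, Pi.zero_apply] at hh hYi ⊢
        linear_combination -hh - a⁻¹ * hYi - X i * hinv
      rcases smul_eq_zero.mp h2 with h' | h'
      · exact hβ ((mul_eq_zero.mp h').resolve_left (inv_ne_zero ha))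
      · exact hf₁ h'
    · have h2 : (1 - c * a) • X = (c * β) • f₁ + (c * γ - a⁻¹ * γ) • f₂ := by
        funext i
        have hh := congrFun h i
        have hYi := congrFun hYe i
        simp only [Pi.add_apply, Pi.smul_apply, smul_eq_mul] at hh hYi ⊢
        linear_combination hh + c * hYi
      apply hXn ((1 - c * a)⁻¹ * (c * β)) ((1 - c * a)⁻¹ * (c * γ - a⁻¹ * γ))
      calc X = (1 - c * a)⁻¹ • ((1 - c * a) • X) := by
              rw [smul_smul, inv_mul_cancel₀ (sub_ne_zero.mpr (Ne.symm hca)), one_smul]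
        _ = _ := by rw [h2, smul_add, smul_smul, smul_smul]
end

section
/- Let A₁, A₂ be real 3×4 matrices of rank 3 with nonzero focal points f₁, f₂ ∈ ℝ⁴ (A₁ f₁ = 0, A₂ f₂ = 0). Let X, Y ∈ ℝ⁴. If there exist a vector X′ ∈ ℝ⁴ and nonzero scalars μ₁, μ₂ ∈ ℝ with A₁ X′ = μ₁ A₁ X and A₂ X′ = μ₂ A₂ Y, then the span of {X, Y, f₁, f₂} has dimension at most 3; that is, the two world points are coplanar with the baseline. -/
open Matrix

private lemma ker_eq_span (A : Matrix (Fin 3) (Fin 4) ℝ) (hr : A.rank = 3)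
    (f : Fin 4 → ℝ) (hf : f ≠ 0) (hAf : A.mulVec f = 0) :
    LinearMap.ker A.mulVecLin = Submodule.span ℝ {f} := by
  have hle : Submodule.span ℝ {f} ≤ LinearMap.ker A.mulVecLin := by
    rw [Submodule.span_singleton_le_iff_mem, LinearMap.mem_ker]
    exact hAf
  have h1 : Module.finrank ℝ (Submodule.span ℝ ({f} : Set (Fin 4 → ℝ))) = 1 :=
    finrank_span_singleton hf
  have h2 : Module.finrank ℝ (LinearMap.ker A.mulVecLin) = 1 := by
    have h := LinearMap.finrank_range_add_finrank_ker A.mulVecLin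
    rw [Matrix.rank] at hr
    have h4 : Module.finrank ℝ (Fin 4 → ℝ) = 4 := by simp
    rw [hr, h4] at h
    omega
  exact (Submodule.eq_of_le_of_finrank_eq hle (by rw [h1, h2])).symm

theorem stmt_9 (A₁ A₂ : Matrix (Fin 3) (Fin 4) ℝ)
    (hrA₁ : A₁.rank = 3) (hrA₂ : A₂.rank = 3)
    (f₁ f₂ : Fin 4 → ℝ) (hf₁ : f₁ ≠ 0) (hf₂ : f₂ ≠ 0)
    (hA₁f₁ : A₁.mulVec f₁ = 0) (hA₂f₂ : A₂.mulVec f₂ = 0)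
    (X Y : Fin 4 → ℝ)
    (hyp : ∃ (X' : Fin 4 → ℝ) (μ₁ μ₂ : ℝ), μ₁ ≠ 0 ∧ μ₂ ≠ 0 ∧
      A₁.mulVec X' = μ₁ • A₁.mulVec X ∧ A₂.mulVec X' = μ₂ • A₂.mulVec Y) :
    Module.finrank ℝ
      (Submodule.span ℝ ({X, Y, f₁, f₂} : Set (Fin 4 → ℝ))) ≤ 3 := by
  classical
  obtain ⟨X', μ₁, μ₂, hμ₁, hμ₂, h1, h2⟩ := hyp
  have hk1 : X' - μ₁ • X ∈ LinearMap.ker A₁.mulVecLin := by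
    simp [LinearMap.mem_ker, Matrix.mulVec_sub, Matrix.mulVec_smul, h1, sub_eq_zero]
  have hk2 : X' - μ₂ • Y ∈ LinearMap.ker A₂.mulVecLin := by
    simp [LinearMap.mem_ker, Matrix.mulVec_sub, Matrix.mulVec_smul, h2, sub_eq_zero]
  rw [ker_eq_span A₁ hrA₁ f₁ hf₁ hA₁f₁, Submodule.mem_span_singleton] at hk1
  rw [ker_eq_span A₂ hrA₂ f₂ hf₂ hA₂f₂, Submodule.mem_span_singleton] at hk2
  obtain ⟨a, ha⟩ := hk1
  obtain ⟨b, hb⟩ := hk2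
  rw [eq_comm, sub_eq_iff_eq_add] at ha hb
  have hm : μ₁ • X = μ₂ • Y + b • f₂ - a • f₁ := by
    have h3 : a • f₁ + μ₁ • X = b • f₂ + μ₂ • Y := by rw [← ha, ← hb]
    have h4 : μ₁ • X = b • f₂ + μ₂ • Y - a • f₁ :=
      eq_sub_of_add_eq (by rw [add_comm]; exact h3)
    rw [h4]; abel
  have hX : X = μ₁⁻¹ • (μ₂ • Y + b • f₂ - a • f₁) := by
    rw [← hm, smul_smul, inv_mul_cancel₀ hμ₁, one_smul]
  have hsub : Submodule.span ℝ ({X, Y, f₁, f₂} : Set (Fin 4 → ℝ)) ≤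
      Submodule.span ℝ ({Y, f₁, f₂} : Set (Fin 4 → ℝ)) := by
    rw [Submodule.span_le]
    intro v hv
    rcases hv with rfl | rfl | rfl | rfl
    · rw [hX]
      have hY : Y ∈ Submodule.span ℝ ({Y, f₁, f₂} : Set (Fin 4 → ℝ)) :=
        Submodule.subset_span (by simp)
      have hg1 : f₁ ∈ Submodule.span ℝ ({Y, f₁, f₂} : Set (Fin 4 → ℝ)) :=
        Submodule.subset_span (by simp)
      have hg2 : f₂ ∈ Submodule.span ℝ ({Y, f₁, f₂} : Set (Fin 4 → ℝ)) :=
        Submodule.subset_span (by simp)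
      exact Submodule.smul_mem _ _ (Submodule.sub_mem _ (Submodule.add_mem _
        (Submodule.smul_mem _ _ hY) (Submodule.smul_mem _ _ hg2))
        (Submodule.smul_mem _ _ hg1))
    · exact Submodule.subset_span (by simp)
    · exact Submodule.subset_span (by simp)
    · exact Submodule.subset_span (by simp)
  refine le_trans (Submodule.finrank_mono hsub) ?_
  have hset : ({Y, f₁, f₂} : Set (Fin 4 → ℝ)) =
      (({Y, f₁, f₂} : Finset (Fin 4 → ℝ)) : Set (Fin 4 → ℝ)) := by simp
  rw [hset]
  refine le_trans (finrank_span_finset_le_card _) ?_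
  refine le_trans (Finset.card_insert_le _ _) ?_
  refine Nat.succ_le_succ ?_
  refine le_trans (Finset.card_insert_le _ _) ?_
  simp
end

section
/- Let A₁, A₂ be real 3×4 matrices of rank 3 with nonzero focal points f₁, f₂ ∈ ℝ⁴ (A₁ f₁ = 0, A₂ f₂ = 0) that are linearly independent. Let X, Y ∈ ℝ⁴ satisfy: X and Y do not lie in the span of {f₁, f₂}, and the span of {X, Y, f₁, f₂} has dimension at most 3. Then the intersection of the planes span{f₁, X} and span{f₂, Y} is a one-dimensional subspace of ℝ⁴, and every vector X″ ∈ ℝ⁴ for which there exist nonzero scalars ν₁, ν₂ with A₁ X″ = ν₁ A₁ X and A₂ X″ = ν₂ A₂ Y lies in this one-dimensional intersection. In particular, the alternative (crosswise) triangulated point is unique up to scale. -/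
open Matrix

private lemma ker_eq_span_focal (A : Matrix (Fin 3) (Fin 4) ℝ) (hr : A.rank = 3)
    (f : Fin 4 → ℝ) (hf : f ≠ 0) (hAf : A.mulVec f = 0) :
    LinearMap.ker A.mulVecLin = Submodule.span ℝ ({f} : Set (Fin 4 → ℝ)) := by
  have hle : Submodule.span ℝ ({f} : Set (Fin 4 → ℝ)) ≤ LinearMap.ker A.mulVecLin := by
    rw [Submodule.span_singleton_le_iff_mem, LinearMap.mem_ker, Matrix.mulVecLin_apply, hAf]
  have hrn := LinearMap.finrank_range_add_finrank_ker A.mulVecLin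
  rw [show Module.finrank ℝ (Fin 4 → ℝ) = 4 by simp] at hrn
  have hrank : Module.finrank ℝ (LinearMap.range A.mulVecLin) = 3 := hr
  have hker : Module.finrank ℝ (LinearMap.ker A.mulVecLin) = 1 := by omega
  exact (Submodule.eq_of_le_of_finrank_le hle
    (by rw [hker, finrank_span_singleton hf])).symm

private lemma finrank_span_pair {a b : Fin 4 → ℝ} (ha : a ≠ 0)
    (hb : b ∉ Submodule.span ℝ ({a} : Set (Fin 4 → ℝ))) :
    Module.finrank ℝ (Submodule.span ℝ ({a, b} : Set (Fin 4 → ℝ))) = 2 := by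
  have hli : LinearIndependent ℝ ![b, a] := by
    rw [linearIndependent_fin2]
    refine ⟨ha, fun c hc => hb ?_⟩
    simp only [Matrix.cons_val_one, Matrix.head_cons, Matrix.cons_val_zero] at hc
    exact Submodule.mem_span_singleton.mpr ⟨c, hc⟩
  have := finrank_span_eq_card hli
  rw [show Set.range ![b, a] = {a, b} by
    simp [Matrix.range_cons, Matrix.range_empty, Set.pair_comm]] at this
  simpa using this

theorem stmt_10 (A₁ A₂ : Matrix (Fin 3) (Fin 4) ℝ)
    (hrA₁ : A₁.rank = 3) (hrA₂ : A₂.rank = 3)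
    (f₁ f₂ : Fin 4 → ℝ) (hf₁ : f₁ ≠ 0) (hf₂ : f₂ ≠ 0)
    (hA₁f₁ : A₁.mulVec f₁ = 0) (hA₂f₂ : A₂.mulVec f₂ = 0)
    (hind : LinearIndependent ℝ ![f₁, f₂])
    (X Y : Fin 4 → ℝ)
    (hX : X ∉ Submodule.span ℝ ({f₁, f₂} : Set (Fin 4 → ℝ)))
    (hY : Y ∉ Submodule.span ℝ ({f₁, f₂} : Set (Fin 4 → ℝ)))
    (hcop : Module.finrank ℝ
      (Submodule.span ℝ ({X, Y, f₁, f₂} : Set (Fin 4 → ℝ))) ≤ 3) :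
    Module.finrank ℝ
      ((Submodule.span ℝ ({f₁, X} : Set (Fin 4 → ℝ))) ⊓
       (Submodule.span ℝ ({f₂, Y} : Set (Fin 4 → ℝ))) : Submodule ℝ (Fin 4 → ℝ)) = 1 ∧
    ∀ (X'' : Fin 4 → ℝ) (ν₁ ν₂ : ℝ), ν₁ ≠ 0 → ν₂ ≠ 0 →
      A₁.mulVec X'' = ν₁ • A₁.mulVec X → A₂.mulVec X'' = ν₂ • A₂.mulVec Y →
      X'' ∈ (Submodule.span ℝ ({f₁, X} : Set (Fin 4 → ℝ))) ⊓
            (Submodule.span ℝ ({f₂, Y} : Set (Fin 4 → ℝ))) := by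
  have hXf₁ : X ∉ Submodule.span ℝ ({f₁} : Set (Fin 4 → ℝ)) := fun h =>
    hX (Submodule.span_mono (by simp) h)
  have hYf₂ : Y ∉ Submodule.span ℝ ({f₂} : Set (Fin 4 → ℝ)) := fun h =>
    hY (Submodule.span_mono (by simp) h)
  have hP₁ : Module.finrank ℝ (Submodule.span ℝ ({f₁, X} : Set (Fin 4 → ℝ))) = 2 :=
    finrank_span_pair hf₁ hXf₁
  have hP₂ : Module.finrank ℝ (Submodule.span ℝ ({f₂, Y} : Set (Fin 4 → ℝ))) = 2 :=
    finrank_span_pair hf₂ hYf₂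
  -- the sup of the two planes is the span of all four vectors
  have hsetsup : ({f₁, X} : Set (Fin 4 → ℝ)) ∪ {f₂, Y} = {X, Y, f₁, f₂} := by
    ext v; simp only [Set.mem_union, Set.mem_insert_iff, Set.mem_singleton_iff]; tauto
  have hsup : Submodule.span ℝ ({f₁, X} : Set (Fin 4 → ℝ)) ⊔
      Submodule.span ℝ ({f₂, Y} : Set (Fin 4 → ℝ)) =
      Submodule.span ℝ ({X, Y, f₁, f₂} : Set (Fin 4 → ℝ)) := by
    rw [← Submodule.span_union, hsetsup]
  -- finrank of span of the four vectors is exactly 3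
  have hff : Module.finrank ℝ (Submodule.span ℝ ({f₁, f₂} : Set (Fin 4 → ℝ))) = 2 := by
    have := finrank_span_eq_card hind
    rw [show Set.range ![f₁, f₂] = {f₁, f₂} by
      simp [Matrix.range_cons, Matrix.range_empty, Set.pair_comm]] at this
    simpa using this
  have hlt : Submodule.span ℝ ({f₁, f₂} : Set (Fin 4 → ℝ)) <
      Submodule.span ℝ ({X, Y, f₁, f₂} : Set (Fin 4 → ℝ)) := by
    have hsub : ({f₁, f₂} : Set (Fin 4 → ℝ)) ⊆ {X, Y, f₁, f₂} := by
      intro v hv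
      simp only [Set.mem_insert_iff, Set.mem_singleton_iff] at hv ⊢
      tauto
    refine lt_of_le_of_ne (Submodule.span_mono hsub) (fun h => hX ?_)
    rw [h]
    exact Submodule.subset_span (by simp)
  have hge : 3 ≤ Module.finrank ℝ (Submodule.span ℝ ({X, Y, f₁, f₂} : Set (Fin 4 → ℝ))) := by
    have := Submodule.finrank_lt_finrank_of_lt hlt
    omega
  have hW : Module.finrank ℝ (Submodule.span ℝ ({X, Y, f₁, f₂} : Set (Fin 4 → ℝ))) = 3 :=
    le_antisymm hcop hge
  have hdim := Submodule.finrank_sup_add_finrank_inf_eq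
    (Submodule.span ℝ ({f₁, X} : Set (Fin 4 → ℝ)))
    (Submodule.span ℝ ({f₂, Y} : Set (Fin 4 → ℝ)))
  rw [hsup, hW, hP₁, hP₂] at hdim
  refine ⟨by omega, ?_⟩
  -- second part
  have hker₁ := ker_eq_span_focal A₁ hrA₁ f₁ hf₁ hA₁f₁
  have hker₂ := ker_eq_span_focal A₂ hrA₂ f₂ hf₂ hA₂f₂
  intro X'' ν₁ ν₂ _ _ h₁ h₂
  constructor
  · have hmem : X'' - ν₁ • X ∈ LinearMap.ker A₁.mulVecLin := by
      rw [LinearMap.mem_ker, Matrix.mulVecLin_apply, Matrix.mulVec_sub, h₁,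
        Matrix.mulVec_smul, sub_self]
    rw [hker₁, Submodule.mem_span_singleton] at hmem
    obtain ⟨c, hc⟩ := hmem
    exact Submodule.mem_span_pair.mpr ⟨c, ν₁, by rw [hc]; abel⟩
  · have hmem : X'' - ν₂ • Y ∈ LinearMap.ker A₂.mulVecLin := by
      rw [LinearMap.mem_ker, Matrix.mulVecLin_apply, Matrix.mulVec_sub, h₂,
        Matrix.mulVec_smul, sub_self]
    rw [hker₂, Submodule.mem_span_singleton] at hmem
    obtain ⟨c, hc⟩ := hmem
    exact Submodule.mem_span_pair.mpr ⟨c, ν₂, by rw [hc]; abel⟩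
end

section
/- Let A₁, A₂, A₃ be real 3×4 matrices of rank 3 with nonzero focal points f₁, f₂, f₃ ∈ ℝ⁴ (Aᵢ fᵢ = 0) that are pairwise linearly independent. If M is a symmetric real 4×4 matrix with A₁ M A₁ᵀ = 0, A₂ M A₂ᵀ = 0, and A₃ M A₃ᵀ = 0, then M = 0. Consequently, for three or more cameras with pairwise distinct focal points, the joint linear map M ↦ (Aᵢ M Aᵢᵀ)ᵢ on symmetric 4×4 matrices has trivial kernel (full column rank of the stacked coefficient matrix). -/
open Matrix

lemma perp_aux (f g : Fin 4 → ℝ) (hf : f ≠ 0) (hg : ∀ c : ℝ, g ≠ c • f) :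
    ∃ y, f ⬝ᵥ y = 0 ∧ g ⬝ᵥ y ≠ 0 := by
  have hff : f ⬝ᵥ f ≠ 0 := fun h => hf (by simpa [dotProduct_self_eq_zero] using h)
  set c : ℝ := (g ⬝ᵥ f) / (f ⬝ᵥ f) with hc
  refine ⟨g - c • f, ?_, ?_⟩
  · have : f ⬝ᵥ (g - c • f) = f ⬝ᵥ g - c * (f ⬝ᵥ f) := by
      simp [dotProduct_sub, dotProduct_smul, smul_eq_mul]
    rw [this, hc, div_mul_cancel₀ _ hff, dotProduct_comm, sub_self]
  · intro h0
    have hfy : f ⬝ᵥ (g - c • f) = 0 := by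
      have : f ⬝ᵥ (g - c • f) = f ⬝ᵥ g - c * (f ⬝ᵥ f) := by
        simp [dotProduct_sub, dotProduct_smul, smul_eq_mul]
      rw [this, hc, div_mul_cancel₀ _ hff, dotProduct_comm, sub_self]
    have hyy : (g - c • f) ⬝ᵥ (g - c • f) = 0 := by
      have : (g - c • f) ⬝ᵥ (g - c • f)
          = g ⬝ᵥ (g - c • f) - c * (f ⬝ᵥ (g - c • f)) := by
        simp [sub_dotProduct, smul_dotProduct, smul_eq_mul]
        ring
      rw [this, h0, hfy]; ring
    have : g - c • f = 0 := dotProduct_self_eq_zero.mp hyy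
    exact hg c (by linear_combination (norm := module) this)

lemma range_aux (A : Matrix (Fin 3) (Fin 4) ℝ) (hr : A.rank = 3)
    (f : Fin 4 → ℝ) (hf : f ≠ 0) (hAf : A *ᵥ f = 0) :
    ∀ x : Fin 4 → ℝ, f ⬝ᵥ x = 0 → ∃ p, x = Aᵀ *ᵥ p := by
  have hff : f ⬝ᵥ f ≠ 0 := fun h => hf (by simpa [dotProduct_self_eq_zero] using h)
  let ψ : (Fin 4 → ℝ) →ₗ[ℝ] ℝ :=
    { toFun := fun x => f ⬝ᵥ x
      map_add' := fun x y => dotProduct_add f x y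
      map_smul' := fun c x => by simp [dotProduct_smul, smul_eq_mul] }
  have hsurj : Function.Surjective ψ := by
    intro r
    exact ⟨(r / (f ⬝ᵥ f)) • f, by simp [ψ, dotProduct_smul, smul_eq_mul, div_mul_cancel₀ _ hff]⟩
  have hker : Module.finrank ℝ (LinearMap.ker ψ) = 3 := by
    have h1 : Module.finrank ℝ (LinearMap.range ψ) + Module.finrank ℝ (LinearMap.ker ψ)
        = Module.finrank ℝ (Fin 4 → ℝ) := LinearMap.finrank_range_add_finrank_ker ψ
    have h2 : LinearMap.range ψ = ⊤ := LinearMap.range_eq_top.mpr hsurj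
    rw [h2] at h1
    simp [Module.finrank_pi, finrank_top] at h1
    omega
  have hle : LinearMap.range (Aᵀ.mulVecLin) ≤ LinearMap.ker ψ := by
    rintro x ⟨p, rfl⟩
    show f ⬝ᵥ (Aᵀ *ᵥ p) = 0
    rw [dotProduct_mulVec, vecMul_transpose, hAf, zero_dotProduct]
  have hrange : Module.finrank ℝ (LinearMap.range (Aᵀ.mulVecLin)) = 3 := by
    have := Matrix.rank_transpose A
    rw [hr] at this
    simpa [Matrix.rank] using this
  have heq : LinearMap.range (Aᵀ.mulVecLin) = LinearMap.ker ψ :=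
    Submodule.eq_of_le_of_finrank_eq hle (by rw [hrange, hker])
  intro x hx
  have : x ∈ LinearMap.range (Aᵀ.mulVecLin) := heq ▸ hx
  obtain ⟨p, hp⟩ := this
  exact ⟨p, hp.symm⟩

lemma pair_aux {f g : Fin 4 → ℝ} (h : LinearIndependent ℝ ![f, g]) :
    f ≠ 0 ∧ ∀ c : ℝ, g ≠ c • f := by
  rw [LinearIndependent.pair_iff] at h
  constructor
  · intro h0
    have := (h 1 0 (by simp [h0])).1
    norm_num at this
  · intro c hc
    have := (h c (-1) (by rw [hc]; module)).2
    norm_num at this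

theorem stmt_13 (A₁ A₂ A₃ : Matrix (Fin 3) (Fin 4) ℝ)
    (hrA₁ : A₁.rank = 3) (hrA₂ : A₂.rank = 3) (hrA₃ : A₃.rank = 3)
    (f₁ f₂ f₃ : Fin 4 → ℝ) (hf₁ : f₁ ≠ 0) (hf₂ : f₂ ≠ 0) (hf₃ : f₃ ≠ 0)
    (hA₁f₁ : A₁.mulVec f₁ = 0) (hA₂f₂ : A₂.mulVec f₂ = 0) (hA₃f₃ : A₃.mulVec f₃ = 0)
    (h₁₂ : LinearIndependent ℝ ![f₁, f₂])
    (h₁₃ : LinearIndependent ℝ ![f₁, f₃])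
    (h₂₃ : LinearIndependent ℝ ![f₂, f₃]) :
    ∀ M : Matrix (Fin 4) (Fin 4) ℝ, M.IsSymm →
      A₁ * M * A₁ᵀ = 0 → A₂ * M * A₂ᵀ = 0 → A₃ * M * A₃ᵀ = 0 → M = 0 := by
  intro M hM h1 h2 h3
  have hff₂ : f₂ ⬝ᵥ f₂ ≠ 0 := fun h => hf₂ (by simpa [dotProduct_self_eq_zero] using h)
  -- symmetry of the bilinear form
  have hsym : ∀ x y : Fin 4 → ℝ, x ⬝ᵥ (M *ᵥ y) = y ⬝ᵥ (M *ᵥ x) := by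
    intro x y
    rw [dotProduct_mulVec, ← mulVec_transpose, hM.eq, dotProduct_comm]
  -- vanishing on the three hyperplanes
  have hvan : ∀ (A : Matrix (Fin 3) (Fin 4) ℝ) (f : Fin 4 → ℝ), A.rank = 3 → f ≠ 0 →
      A *ᵥ f = 0 → A * M * Aᵀ = 0 →
      ∀ x y, f ⬝ᵥ x = 0 → f ⬝ᵥ y = 0 → x ⬝ᵥ (M *ᵥ y) = 0 := by
    intro A f hr hf hAf hAMA x y hx hy
    obtain ⟨p, rfl⟩ := range_aux A hr f hf hAf x hx
    obtain ⟨r, rfl⟩ := range_aux A hr f hf hAf y hy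
    rw [mulVec_mulVec, dotProduct_mulVec, mulVec_transpose, vecMul_vecMul,
      ← Matrix.mul_assoc, hAMA]
    simp
  have hB1 := hvan A₁ f₁ hrA₁ hf₁ hA₁f₁ h1
  have hB2 := hvan A₂ f₂ hrA₂ hf₂ hA₂f₂ h2
  have hB3 := hvan A₃ f₃ hrA₃ hf₃ hA₃f₃ h3
  -- the linear factor
  set g : Fin 4 → ℝ := (f₂ ⬝ᵥ f₂)⁻¹ • f₂ with hg
  set k : ℝ := g ⬝ᵥ (M *ᵥ g) with hk
  set L : (Fin 4 → ℝ) → ℝ := fun x => 2 * (x ⬝ᵥ (M *ᵥ g)) - (f₂ ⬝ᵥ x) * k with hL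
  have hLadd : ∀ x y, L (x + y) = L x + L y := by
    intro x y
    simp only [hL, add_dotProduct, dotProduct_add]
    ring
  have hLsmul : ∀ (c : ℝ) x, L (c • x) = c * L x := by
    intro c x
    simp only [hL, smul_dotProduct, dotProduct_smul, smul_eq_mul]
    ring
  -- key factorization q x = (f₂ ⬝ᵥ x) * L x
  have key : ∀ x : Fin 4 → ℝ, x ⬝ᵥ (M *ᵥ x) = (f₂ ⬝ᵥ x) * L x := by
    intro x
    set c : ℝ := f₂ ⬝ᵥ x with hc
    have hfg : f₂ ⬝ᵥ g = 1 := by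
      rw [hg, dotProduct_smul, smul_eq_mul, inv_mul_cancel₀ hff₂]
    have hx' : f₂ ⬝ᵥ (x - c • g) = 0 := by
      rw [dotProduct_sub, dotProduct_smul, smul_eq_mul, hfg, mul_one, ← hc, sub_self]
    have h0 := hB2 _ _ hx' hx'
    have hexp : (x - c • g) ⬝ᵥ (M *ᵥ (x - c • g))
        = x ⬝ᵥ (M *ᵥ x) - c * (x ⬝ᵥ (M *ᵥ g)) - c * (g ⬝ᵥ (M *ᵥ x)) + c * c * k := by
      rw [hk]
      simp only [mulVec_sub, mulVec_smul, dotProduct_sub, sub_dotProduct,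
        dotProduct_smul, smul_dotProduct, smul_eq_mul]
      ring
    rw [hexp] at h0
    have hs := hsym g x
    rw [hL]
    simp only []
    rw [← hc]
    linear_combination h0 + c * hs
  -- L vanishes on the first hyperplane
  have hvanL : ∀ (f : Fin 4 → ℝ),
      (∀ x y, f ⬝ᵥ x = 0 → f ⬝ᵥ y = 0 → x ⬝ᵥ (M *ᵥ y) = 0) →
      f ≠ 0 → (∀ c : ℝ, f₂ ≠ c • f) → ∀ x, f ⬝ᵥ x = 0 → L x = 0 := by
    intro f hB hf hind x hx
    obtain ⟨y, hy1, hy2⟩ := perp_aux f f₂ hf hind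
    have hLy : L y = 0 := by
      have := key y
      rw [hB y y hy1 hy1] at this
      have := this.symm
      rcases mul_eq_zero.mp this with h | h
      · exact absurd h hy2
      · exact h
    by_cases hx2 : f₂ ⬝ᵥ x = 0
    · have hxy : f ⬝ᵥ (x + y) = 0 := by rw [dotProduct_add, hx, hy1, add_zero]
      have hq : (x + y) ⬝ᵥ (M *ᵥ (x + y)) = 0 := hB _ _ hxy hxy
      have h2' : f₂ ⬝ᵥ (x + y) ≠ 0 := by
        rw [dotProduct_add, hx2, zero_add]; exact hy2
      have hLxy : L (x + y) = 0 := by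
        have := key (x + y)
        rw [hq] at this
        rcases mul_eq_zero.mp this.symm with h | h
        · exact absurd h h2'
        · exact h
      have := hLadd x y
      rw [hLxy, hLy] at this
      linarith [this.symm]
    · have hq : x ⬝ᵥ (M *ᵥ x) = 0 := hB _ _ hx hx
      have := key x
      rw [hq] at this
      rcases mul_eq_zero.mp this.symm with h | h
      · exact absurd h hx2
      · exact h
  have hind12 := pair_aux h₁₂
  have hind13 := pair_aux h₁₃
  have hind23 := pair_aux h₂₃
  have hL1 : ∀ x, f₁ ⬝ᵥ x = 0 → L x = 0 :=
    hvanL f₁ hB1 hf₁ hind12.2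
  have hL3 : ∀ x, f₃ ⬝ᵥ x = 0 → L x = 0 := by
    apply hvanL f₃ hB3 hf₃
    intro c hc
    rw [LinearIndependent.pair_iff] at h₂₃
    have := (h₂₃ 1 (-c) (by rw [hc]; module)).1
    norm_num at this
  -- L vanishes everywhere
  have hL0 : ∀ x, L x = 0 := by
    have h13 : ∀ c : ℝ, f₁ ≠ c • f₃ := by
      intro c hc
      rw [LinearIndependent.pair_iff] at h₁₃
      have := (h₁₃ 1 (-c) (by rw [hc]; module)).1
      norm_num at this
    obtain ⟨y, hy3, hy1⟩ := perp_aux f₃ f₁ hf₃ h13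
    intro x
    set c : ℝ := (f₁ ⬝ᵥ x) / (f₁ ⬝ᵥ y) with hc
    have hx1 : f₁ ⬝ᵥ (x - c • y) = 0 := by
      rw [dotProduct_sub, dotProduct_smul, smul_eq_mul, hc, div_mul_cancel₀ _ hy1, sub_self]
    have e1 : L (x - c • y) = 0 := hL1 _ hx1
    have e2 : L y = 0 := hL3 y hy3
    have : L ((x - c • y) + c • y) = L (x - c • y) + L (c • y) := hLadd _ _
    rw [sub_add_cancel, e1, hLsmul, e2] at this
    rw [this]; ring
  -- the quadratic form vanishes, hence the bilinear form, hence M = 0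
  have hq0 : ∀ x, x ⬝ᵥ (M *ᵥ x) = 0 := by
    intro x; rw [key x, hL0 x, mul_zero]
  have hB0 : ∀ x y, x ⬝ᵥ (M *ᵥ y) = 0 := by
    intro x y
    have h0 := hq0 (x + y)
    have hexp : (x + y) ⬝ᵥ (M *ᵥ (x + y))
        = x ⬝ᵥ (M *ᵥ x) + x ⬝ᵥ (M *ᵥ y) + y ⬝ᵥ (M *ᵥ x) + y ⬝ᵥ (M *ᵥ y) := by
      simp only [mulVec_add, dotProduct_add, add_dotProduct]
      ring
    rw [hexp, hq0 x, hq0 y, hsym y x] at h0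
    linarith
  ext i j
  have := hB0 (Pi.single i 1) (Pi.single j 1)
  simpa [dotProduct, mulVec, Pi.single_apply, Finset.sum_ite_eq, Finset.sum_ite_eq'] using this
end

section
/- Let A₁, A₂ be real 3×4 matrices of rank 3 with nonzero focal points f₁, f₂ ∈ ℝ⁴ (A₁ f₁ = 0, A₂ f₂ = 0) that are linearly independent. Let e₁₂ = A₁ f₂ be the epipole, let v ∈ ℝ³, and set N₁ = e₁₂ vᵀ + v e₁₂ᵀ. Then for EVERY symmetric real 3×3 matrix N₂, the linear map L sending (M′, λ₁, λ₂) (with M′ symmetric 4×4 and λ₁, λ₂ ∈ ℝ) to (A₁ M′ A₁ᵀ − λ₁ N₁, A₂ M′ A₂ᵀ − λ₂ N₂) has kernel of dimension at least 2: specifically, (f₁ f₂ᵀ + f₂ f₁ᵀ, 0, 0) ∈ ker L, and there exists w ∈ ℝ⁴ with A₁ w = v such that (f₂ wᵀ + w f₂ᵀ, 1, 0) ∈ ker L, and these two kernel elements are linearly independent. Hence when N₁ is built from the epipole, the rank condition on L imposes no constraint on N₂. -/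
open Matrix

private lemma key_conj (A : Matrix (Fin 3) (Fin 4) ℝ) (a b : Fin 4 → ℝ) :
    A * vecMulVec a b * Aᵀ = vecMulVec (A.mulVec a) (A.mulVec b) := by
  ext i j
  simp only [Matrix.mul_apply, vecMulVec_apply, mulVec, dotProduct, transpose_apply]
  rw [Finset.sum_mul_sum, Finset.sum_comm]
  simp only [Finset.sum_mul]
  congr 1; ext k; congr 1; ext l; ring

private lemma key_surj (A : Matrix (Fin 3) (Fin 4) ℝ) (h : A.rank = 3) :
    Function.Surjective A.mulVec := by
  have hr : LinearMap.range A.mulVecLin = ⊤ := by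
    apply Submodule.eq_top_of_finrank_eq
    rw [show Module.finrank ℝ ↥(LinearMap.range A.mulVecLin) = A.rank from rfl, h]
    simp [Module.finrank_pi]
  intro y
  obtain ⟨x, hx⟩ := LinearMap.range_eq_top.mp hr y
  exact ⟨x, by simpa using hx⟩

private lemma sym_mem (a b : Fin 4 → ℝ) : vecMulVec a b + vecMulVec b a ∈ Sym4 := by
  show Matrix.IsSymm _
  rw [Matrix.IsSymm]
  ext i j
  simp only [vecMulVec_apply, transpose_apply, Matrix.add_apply]
  ring

private lemma vmv_zero_left {m n : Type*} [Fintype m] [Fintype n] (b : n → ℝ) :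
    vecMulVec (0 : m → ℝ) b = 0 := by
  ext i j; simp [vecMulVec_apply]

private lemma vmv_zero_right {m n : Type*} [Fintype m] [Fintype n] (a : m → ℝ) :
    vecMulVec a (0 : n → ℝ) = 0 := by
  ext i j; simp [vecMulVec_apply]

private lemma rank_ge_two {M : Type} [AddCommGroup M] [Module ℝ M] (S : Submodule ℝ M)
    (x y : M) (hx : x ∈ S) (hy : y ∈ S) (h : LinearIndependent ℝ ![x, y]) :
    2 ≤ Module.rank ℝ S := by
  have hli' : LinearIndependent ℝ ![(⟨x, hx⟩ : S), ⟨y, hy⟩] := by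
    apply LinearIndependent.of_comp S.subtype
    have heq : S.subtype ∘ ![(⟨x, hx⟩ : S), ⟨y, hy⟩] = ![x, y] := by
      funext i; fin_cases i <;> rfl
    rw [heq]; exact h
  have := hli'.cardinal_le_rank
  simpa using this

set_option maxHeartbeats 1000000 in
set_option synthInstance.maxHeartbeats 400000 in
theorem stmt_15 (A₁ A₂ : Matrix (Fin 3) (Fin 4) ℝ)
    (hrA₁ : A₁.rank = 3) (hrA₂ : A₂.rank = 3)
    (f₁ f₂ : Fin 4 → ℝ) (hf₁ : f₁ ≠ 0) (hf₂ : f₂ ≠ 0)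
    (hA₁f₁ : A₁.mulVec f₁ = 0) (hA₂f₂ : A₂.mulVec f₂ = 0)
    (hind : LinearIndependent ℝ ![f₁, f₂])
    (v : Fin 3 → ℝ) (e₁₂ : Fin 3 → ℝ) (he : e₁₂ = A₁.mulVec f₂)
    (N₁ : Matrix (Fin 3) (Fin 3) ℝ) (hN₁ : N₁ = vecMulVec e₁₂ v + vecMulVec v e₁₂)
    (N₂ : Matrix (Fin 3) (Fin 3) ℝ) (hN₂ : N₂.IsSymm)
    (L : (Sym4 × ℝ × ℝ) →ₗ[ℝ] Matrix (Fin 3) (Fin 3) ℝ × Matrix (Fin 3) (Fin 3) ℝ)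
    (hL : ∀ p : Sym4 × ℝ × ℝ,
      L p = (A₁ * (p.1 : Matrix (Fin 4) (Fin 4) ℝ) * A₁ᵀ - p.2.1 • N₁,
             A₂ * (p.1 : Matrix (Fin 4) (Fin 4) ℝ) * A₂ᵀ - p.2.2 • N₂)) :
    ∃ hF : vecMulVec f₁ f₂ + vecMulVec f₂ f₁ ∈ Sym4,
      (⟨vecMulVec f₁ f₂ + vecMulVec f₂ f₁, hF⟩, (0 : ℝ), (0 : ℝ)) ∈ LinearMap.ker L ∧
      (∃ (w : Fin 4 → ℝ) (hG : vecMulVec f₂ w + vecMulVec w f₂ ∈ Sym4),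
        A₁.mulVec w = v ∧
        (⟨vecMulVec f₂ w + vecMulVec w f₂, hG⟩, (1 : ℝ), (0 : ℝ)) ∈ LinearMap.ker L ∧
        LinearIndependent ℝ
          ![((⟨vecMulVec f₁ f₂ + vecMulVec f₂ f₁, hF⟩, (0 : ℝ), (0 : ℝ)) :
              Sym4 × ℝ × ℝ),
            (⟨vecMulVec f₂ w + vecMulVec w f₂, hG⟩, (1 : ℝ), (0 : ℝ))]) ∧
      2 ≤ Module.rank ℝ (LinearMap.ker L) := by
  have hF : vecMulVec f₁ f₂ + vecMulVec f₂ f₁ ∈ Sym4 := sym_mem f₁ f₂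
  -- X in kernel
  have hXker : ((⟨vecMulVec f₁ f₂ + vecMulVec f₂ f₁, hF⟩, (0 : ℝ), (0 : ℝ)) :
      Sym4 × ℝ × ℝ) ∈ LinearMap.ker L := by
    rw [LinearMap.mem_ker, hL]
    have h1 : A₁ * (vecMulVec f₁ f₂ + vecMulVec f₂ f₁) * A₁ᵀ = 0 := by
      rw [Matrix.mul_add, Matrix.add_mul, key_conj, key_conj, hA₁f₁,
        vmv_zero_left, vmv_zero_right, add_zero]
    have h2 : A₂ * (vecMulVec f₁ f₂ + vecMulVec f₂ f₁) * A₂ᵀ = 0 := by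
      rw [Matrix.mul_add, Matrix.add_mul, key_conj, key_conj, hA₂f₂,
        vmv_zero_left, vmv_zero_right, add_zero]
    simp [h1, h2]
  obtain ⟨w, hw⟩ := key_surj A₁ hrA₁ v
  have hG : vecMulVec f₂ w + vecMulVec w f₂ ∈ Sym4 := sym_mem f₂ w
  have hYker : ((⟨vecMulVec f₂ w + vecMulVec w f₂, hG⟩, (1 : ℝ), (0 : ℝ)) :
      Sym4 × ℝ × ℝ) ∈ LinearMap.ker L := by
    rw [LinearMap.mem_ker, hL]
    have h1 : A₁ * (vecMulVec f₂ w + vecMulVec w f₂) * A₁ᵀ = N₁ := by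
      rw [Matrix.mul_add, Matrix.add_mul, key_conj, key_conj, hw, hN₁, he]
    have h2 : A₂ * (vecMulVec f₂ w + vecMulVec w f₂) * A₂ᵀ = 0 := by
      rw [Matrix.mul_add, Matrix.add_mul, key_conj, key_conj, hA₂f₂,
        vmv_zero_left, vmv_zero_right, add_zero]
    simp [h1, h2]
  -- the first matrix is nonzero
  have hFne : vecMulVec f₁ f₂ + vecMulVec f₂ f₁ ≠ 0 := by
    intro h
    obtain ⟨j, hj⟩ := Function.ne_iff.mp hf₂
    simp only [Pi.zero_apply] at hj
    have hentry : ∀ i, f₁ i * f₂ j + f₂ i * f₁ j = 0 := by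
      intro i
      have := congrFun (congrFun h i) j
      simpa [vecMulVec_apply] using this
    have hmul : (1 : ℝ) • f₁ + (f₁ j / f₂ j) • f₂ = 0 := by
      funext i
      have := hentry i
      simp only [Pi.add_apply, Pi.smul_apply, smul_eq_mul, one_mul, Pi.zero_apply]
      field_simp
      linarith [this]
    have := (LinearIndependent.pair_iff.mp hind) 1 (f₁ j / f₂ j) hmul
    exact one_ne_zero this.1
  -- linear independence of the two kernel elements
  have hli : LinearIndependent ℝ
      ![((⟨vecMulVec f₁ f₂ + vecMulVec f₂ f₁, hF⟩, (0 : ℝ), (0 : ℝ)) :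
          Sym4 × ℝ × ℝ),
        (⟨vecMulVec f₂ w + vecMulVec w f₂, hG⟩, (1 : ℝ), (0 : ℝ))] := by
    rw [LinearIndependent.pair_iff]
    intro s t hst
    have ht : t = 0 := by
      have := congrArg (fun p => p.2.1) hst
      simpa using this
    subst ht
    have hs : s • ((⟨vecMulVec f₁ f₂ + vecMulVec f₂ f₁, hF⟩ : Sym4) :
        Matrix (Fin 4) (Fin 4) ℝ) = 0 := by
      have := congrArg (fun p => ((p.1 : Sym4) : Matrix (Fin 4) (Fin 4) ℝ)) hst
      simpa using this
    rcases smul_eq_zero.mp hs with h | h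
    · exact ⟨h, rfl⟩
    · exact absurd h hFne
  refine ⟨hF, hXker, ⟨w, hG, hw, hYker, hli⟩, ?_⟩
  exact rank_ge_two _ _ _ hXker hYker hli
end
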